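/- Let M = (1/√3) · [[1, (1/√2)e^{iπ/3}], [√2, -2e^{iπ/3}]]. The eigenvalues of M are λ± = -i/2 ± (1/2)√(1 + 2√3 i), and these two eigenvalues have different absolute values. -/

import Mathlib

open Matrix Complex

noncomputable def M : Matrix (Fin 2) (Fin 2) ℂ :=
  ((Real.sqrt 3 : ℂ)⁻¹) •
    !![1, (Real.sqrt 2 : ℂ)⁻¹ * Complex.exp (Real.pi / 3 * Complex.I);
       (Real.sqrt 2 : ℂ), -2 * Complex.exp (Real.pi / 3 * Complex.I)]

lemma exp_pi3 : Complex.exp (Real.pi / 3 * Complex.I) = 1/2 + (Real.sqrt 3 : ℂ)/2 * Complex.I := by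
  have h : ((Real.pi : ℂ) / 3) = ((Real.pi / 3 : ℝ) : ℂ) := by push_cast; ring
  rw [h, Complex.exp_mul_I, ← Complex.ofReal_cos, ← Complex.ofReal_sin,
    Real.cos_pi_div_three, Real.sin_pi_div_three]
  push_cast; ring

lemma det_eig (lam : ℂ) (h : lam ^ 2 + Complex.I * lam - (1/2 + (Real.sqrt 3 : ℂ)/2 * Complex.I) = 0) :
    Matrix.det (M - lam • (1 : Matrix (Fin 2) (Fin 2) ℂ)) = 0 := by
  have h2 : (Real.sqrt 2 : ℂ) * (Real.sqrt 2 : ℂ) = 2 := by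
    rw [← Complex.ofReal_mul, Real.mul_self_sqrt (by norm_num)]; norm_num
  have h3 : (Real.sqrt 3 : ℂ) * (Real.sqrt 3 : ℂ) = 3 := by
    rw [← Complex.ofReal_mul, Real.mul_self_sqrt (by norm_num)]; norm_num
  have h3ne : (Real.sqrt 3 : ℂ) ≠ 0 := by intro h0; rw [h0] at h3; norm_num at h3
  have h2ne : (Real.sqrt 2 : ℂ) ≠ 0 := by intro h0; rw [h0] at h2; norm_num at h2
  simp only [M, Matrix.det_fin_two, Matrix.sub_apply, Matrix.smul_apply, Matrix.one_apply,
    Matrix.cons_val', Matrix.cons_val_zero, Matrix.cons_val_one, Matrix.head_cons,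
    Matrix.head_fin_const, Matrix.empty_val', Matrix.cons_val_fin_one, exp_pi3, smul_eq_mul, Matrix.of_apply]
  simp only [Fin.isValue, if_true, if_neg (by decide : ¬ ((0:Fin 2) = 1)),
    if_neg (by decide : ¬ ((1:Fin 2) = 0)), mul_zero, mul_one, sub_zero]
  field_simp
  linear_combination (2*(Real.sqrt 3:ℂ)^2) * h +
    ((1+(Real.sqrt 3:ℂ)*Complex.I)) * h3

/-- The eigenvalues of `M` are `-i/2 ± (1/2)c` where `c` is a fixed square root of
`1 + 2√3 i`, and these two eigenvalues have different absolute values. -/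
theorem stmt1 (c : ℂ) (hc : c ^ 2 = 1 + 2 * (Real.sqrt 3 : ℂ) * Complex.I) :
    (Matrix.det (M - (-Complex.I / 2 + c / 2) • (1 : Matrix (Fin 2) (Fin 2) ℂ)) = 0) ∧
    (Matrix.det (M - (-Complex.I / 2 - c / 2) • (1 : Matrix (Fin 2) (Fin 2) ℂ)) = 0) ∧
    ‖-Complex.I / 2 + c / 2‖ ≠ ‖-Complex.I / 2 - c / 2‖ := by
  refine ⟨det_eig _ (by linear_combination hc/4 - Complex.I_sq/4),
    det_eig _ (by linear_combination hc/4 - Complex.I_sq/4), ?_⟩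
  intro habs
  have hsq : Complex.normSq (c - Complex.I) = Complex.normSq (c + Complex.I) := by
    have e1 : -Complex.I/2 + c/2 = (c - Complex.I)/2 := by ring
    have e2 : -Complex.I/2 - c/2 = -((c + Complex.I)/2) := by ring
    rw [e1, e2, norm_neg, norm_div, norm_div] at habs
    calc Complex.normSq (c - Complex.I) = ‖c - Complex.I‖^2 := (Complex.sq_norm _).symm
      _ = ‖c + Complex.I‖^2 := by
          rw [div_eq_div_iff (by simp) (by simp)] at habs
          have h2 : ‖(2:ℂ)‖ ≠ 0 := by simp
          have : ‖c - Complex.I‖ = ‖c + Complex.I‖ :=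
            mul_right_cancel₀ h2 habs
          rw [this]
      _ = Complex.normSq (c + Complex.I) := Complex.sq_norm _
  have hci : c.im = 0 := by
    simp only [Complex.normSq_apply, Complex.sub_re, Complex.sub_im, Complex.add_re,
      Complex.add_im, Complex.I_re, Complex.I_im] at hsq
    linarith
  have him : (c ^ 2).im = 2 * Real.sqrt 3 := by rw [hc]; simp
  rw [pow_two, Complex.mul_im, hci, mul_zero, zero_mul, add_zero] at him
  have : Real.sqrt 3 > 0 := Real.sqrt_pos.mpr (by norm_num)
  linarith
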